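/- Let F : ℝ^d_≥ → ℝ^d be a vector-field that is block-constant at x ∈ ℝ^d_≥. Then the extension F^ext is point-symmetric at x, i.e. F^ext(Πx) = ΠF^ext(x) for all permutation matrices Π. Moreover, if F^ext is also C¹ at x, then its derivative matrix satisfies Π* (F^ext)'|_x Π = (F^ext)'|_x for every permutation matrix Π ∈ per(x). -/

import Mathlib

open Matrix

private lemma antitone_unique {d : ℕ} {y : Fin d → ℝ} {σ τ : Equiv.Perm (Fin d)}
    (hσ : Antitone (y ∘ σ)) (hτ : Antitone (y ∘ τ)) : y ∘ σ = y ∘ τ := by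
  have h1 : Monotone ((-y) ∘ σ) := by simpa [Function.comp_def] using hσ.neg
  have h2 : Monotone ((-y) ∘ τ) := by simpa [Function.comp_def] using hτ.neg
  have h := Tuple.unique_monotone h1 h2
  funext k
  simpa using congrFun h k

/-- Symmetry of the extension at an antitone point where `F` is block-constant. -/
private lemma symm_at_x {d : ℕ} {F Fext : (Fin d → ℝ) → Fin d → ℝ} {x : Fin d → ℝ}
    (hx : Antitone x) (hbc : ∀ m n, x m = x n → F x m = F x n)
    (hFext : ∀ y : Fin d → ℝ, ∃ σ : Equiv.Perm (Fin d),
      Antitone (y ∘ σ) ∧ Fext y = F (y ∘ σ) ∘ σ.symm)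
    (π : Equiv.Perm (Fin d)) : Fext (x ∘ π) = Fext x ∘ π := by
  obtain ⟨τ, hτ1, hτ2⟩ := hFext (x ∘ π)
  obtain ⟨ρ, hρ1, hρ2⟩ := hFext x
  have h1 : Antitone (x ∘ ⇑(π * τ)) := by
    simpa [Equiv.Perm.coe_mul, Function.comp_assoc] using hτ1
  have h2 : Antitone (x ∘ ⇑(1 : Equiv.Perm (Fin d))) := by simpa using hx
  have hρ1' : Antitone (x ∘ ⇑ρ) := hρ1
  have key : (x ∘ ⇑π) ∘ ⇑τ = x := by
    have := antitone_unique h1 h2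
    simpa [Equiv.Perm.coe_mul, Function.comp_assoc] using this
  have keyρ : x ∘ ⇑ρ = x := by
    have := antitone_unique hρ1' h2
    simpa using this
  funext k
  have e1 : Fext (x ∘ ⇑π) k = F x (τ.symm k) := by
    rw [hτ2, key]; rfl
  have e2 : (Fext x ∘ ⇑π) k = F x (ρ.symm (π k)) := by
    simp only [Function.comp_apply, hρ2, keyρ]
  rw [e1, e2]
  apply hbc
  have hv1 : x (τ.symm k) = x (π k) := by
    have := congrFun key (τ.symm k)
    simpa using this.symm
  have hv2 : x (ρ.symm (π k)) = x (π k) := by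
    have := congrFun keyρ (ρ.symm (π k))
    simpa using this.symm
  rw [hv1, hv2]

/-- Symmetry of the extension at an injective point. -/
private lemma symm_at_inj {d : ℕ} {F Fext : (Fin d → ℝ) → Fin d → ℝ} {y : Fin d → ℝ}
    (hy : Function.Injective y)
    (hFext : ∀ y : Fin d → ℝ, ∃ σ : Equiv.Perm (Fin d),
      Antitone (y ∘ σ) ∧ Fext y = F (y ∘ σ) ∘ σ.symm)
    (π : Equiv.Perm (Fin d)) : Fext (y ∘ π) = Fext y ∘ π := by
  obtain ⟨τ, hτ1, hτ2⟩ := hFext (y ∘ π)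
  obtain ⟨ρ, hρ1, hρ2⟩ := hFext y
  have h1 : Antitone (y ∘ ⇑(π * τ)) := by
    simpa [Equiv.Perm.coe_mul, Function.comp_assoc] using hτ1
  have key : (y ∘ ⇑π) ∘ ⇑τ = y ∘ ⇑ρ := by
    have := antitone_unique h1 hρ1
    simpa [Equiv.Perm.coe_mul, Function.comp_assoc] using this
  funext k
  have e1 : Fext (y ∘ ⇑π) k = F (y ∘ ⇑ρ) (τ.symm k) := by
    rw [hτ2, key]; rfl
  have e2 : (Fext y ∘ ⇑π) k = F (y ∘ ⇑ρ) (ρ.symm (π k)) := by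
    simp only [Function.comp_apply, hρ2]
  rw [e1, e2]
  have hidx : τ.symm k = ρ.symm (π k) := by
    have hval : (y ∘ ⇑ρ) (τ.symm k) = (y ∘ ⇑ρ) (ρ.symm (π k)) := by
      have h3 := congrFun key (τ.symm k)
      simp only [Function.comp_apply, Equiv.apply_symm_apply] at h3 ⊢
      rw [← h3]
    exact ρ.injective (hy hval)
  rw [hidx]


/-- **Proposition (point-symmetry of the extension and invariance of its derivative).**
If a vector field `F : ℝ^d_≥ → ℝ^d` is block-constant at `x ∈ ℝ^d_≥`, then its
extension `F^ext` (obtained by sorting the argument) is point-symmetric at `x`: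
`F^ext(Πx) = Π F^ext(x)` for all permutation matrices `Π` (here expressed as
`F^ext(x ∘ σ) = F^ext(x) ∘ σ` for all permutations `σ`).  Moreover, if `F^ext`
is also C¹ at `x` with derivative `D`, then `Π* (F^ext)'|_x Π = (F^ext)'|_x`
for every permutation matrix `Π ∈ per(x)`, i.e. the matrix
`M i j = D (e_j) i` satisfies `M (σ i) (σ j) = M i j` whenever `x ∘ σ = x`. -/
theorem Fext_point_symmetric_and_derivative_invariant {d : ℕ}
    (F Fext : (Fin d → ℝ) → Fin d → ℝ) (x : Fin d → ℝ)
    (hx : Antitone x)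
    -- `F` is block-constant at `x`:
    (hbc : ∀ m n, x m = x n → F x m = F x n)
    -- `Fext` is the extension `F^ext`, obtained by sorting the argument:
    (hFext : ∀ y : Fin d → ℝ, ∃ σ : Equiv.Perm (Fin d),
      Antitone (y ∘ σ) ∧ Fext y = F (y ∘ σ) ∘ σ.symm) :
    (∀ σ : Equiv.Perm (Fin d), Fext (x ∘ σ) = Fext x ∘ σ) ∧
    (∀ D : (Fin d → ℝ) →L[ℝ] (Fin d → ℝ),
      ContDiffAt ℝ 1 Fext x → HasFDerivAt Fext D x →
      ∀ σ : Equiv.Perm (Fin d), x ∘ σ = x →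
        ∀ i j, D (Pi.single (σ j) 1) (σ i) = D (Pi.single j 1) i) := by
  refine ⟨fun σ => symm_at_x hx hbc hFext σ, ?_⟩
  intro D _ hD σ hσ i j
  have hσsymm : x ∘ ⇑σ.symm = x := by
    funext k
    have := congrFun hσ (σ.symm k)
    simpa using this.symm
  -- derivative of t ↦ Fext (x + t • w) k at 0 is D w k
  have hline : ∀ (w : Fin d → ℝ) (k : Fin d),
      HasDerivAt (fun t : ℝ => Fext (x + t • w) k) (D w k) 0 := by
    intro w k
    have hcurve : HasDerivAt (fun t : ℝ => x + t • w) w 0 := by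
      simpa using ((hasDerivAt_id (0 : ℝ)).smul_const w).const_add x
    have hD' : HasFDerivAt Fext D (x + (0 : ℝ) • w) := by simpa using hD
    have hfull : HasDerivAt (fun t : ℝ => Fext (x + t • w)) (D w) 0 :=
      hD'.comp_hasDerivAt 0 hcurve
    exact (hasDerivAt_pi.mp hfull) k
  -- the key directional identity along generic directions
  have hzero : ∀ v : Fin d → ℝ, (∀ m n : Fin d, m ≠ n → x m = x n → v m ≠ v n) →
      D (v ∘ ⇑σ.symm) (σ i) = D v i := by
    intro v hv
    have hev : ∀ᶠ t in nhds (0 : ℝ),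
        ∀ m n : Fin d, x m ≠ x n → x m + t * v m ≠ x n + t * v n := by
      rw [Filter.eventually_all]
      intro m
      rw [Filter.eventually_all]
      intro n
      by_cases h : x m = x n
      · filter_upwards with t hmn; exact absurd h hmn
      · have hc : Continuous fun t : ℝ => x m + t * v m - (x n + t * v n) := by
          continuity
        have h0 : x m + (0 : ℝ) * v m - (x n + (0 : ℝ) * v n) ≠ 0 := by
          simpa using sub_ne_zero.mpr h
        filter_upwards [hc.continuousAt.eventually_ne h0] with t ht _
        exact fun hc' => ht (by rw [hc', sub_self])
    have heq : (fun t : ℝ => Fext (x + t • (v ∘ ⇑σ.symm)) (σ i)) =ᶠ[nhds (0 : ℝ)]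
        fun t : ℝ => Fext (x + t • v) i := by
      filter_upwards [hev] with t ht
      rcases eq_or_ne t 0 with rfl | htne
      · simp only [zero_smul, add_zero]
        have h1 := congrFun (symm_at_x hx hbc hFext σ.symm) (σ i)
        rw [hσsymm] at h1
        simpa using h1
      · set y := x + t • v with hy
        have hyinj : Function.Injective y := by
          intro m n hmn
          by_contra hne
          by_cases hx' : x m = x n
          · have hv' := hv m n hne hx'
            have : x m + t * v m = x n + t * v n := by
              simpa [hy] using hmn
            rw [hx'] at this
            exact hv' (mul_left_cancel₀ htne (by linarith))
          · exact ht m n hx' (by simpa [hy] using hmn)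
        have h1 : x + t • (v ∘ ⇑σ.symm) = y ∘ ⇑σ.symm := by
          funext k
          have h2 : x ((Equiv.symm σ) k) = x k := by simpa using congrFun hσsymm k
          simp only [hy, Pi.add_apply, Pi.smul_apply, Function.comp_apply, smul_eq_mul]
          rw [h2]
        rw [h1, congrFun (symm_at_inj hyinj hFext σ.symm) (σ i)]
        simp [hy]
    have hd1 : HasDerivAt (fun t : ℝ => Fext (x + t • (v ∘ ⇑σ.symm)) (σ i))
        (D (v ∘ ⇑σ.symm) (σ i)) 0 := hline _ _
    have hd2 : HasDerivAt (fun t : ℝ => Fext (x + t • (v ∘ ⇑σ.symm)) (σ i))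
        (D v i) 0 := (hline v i).congr_of_eventuallyEq heq
    exact hd1.unique hd2
  -- apply to generic vectors to extract the `j`-th column
  set v0 : Fin d → ℝ := fun m => (m : Fin d).val with hv0def
  have hv0 : ∀ m n : Fin d, m ≠ n → x m = x n → v0 m ≠ v0 n := by
    intro m n hmn _ h
    exact hmn (Fin.val_injective (Nat.cast_injective h))
  set e : Fin d → ℝ := Pi.single j 1 with he
  have hgen : ∀ s : ℝ, |s| < 1 →
      ∀ m n : Fin d, m ≠ n → x m = x n → (v0 + s • e) m ≠ (v0 + s • e) n := by
    intro s hs m n hmn hxmn h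
    have h1 : (1 : ℝ) ≤ |v0 m - v0 n| := by
      have : v0 m ≠ v0 n := hv0 m n hmn hxmn
      have hint : (v0 m - v0 n) = (((m.val : ℤ) - n.val : ℤ) : ℝ) := by
        simp only [hv0def]
        push_cast
        ring
      rw [hint]
      have hne : ((m.val : ℤ) - n.val) ≠ 0 := by
        rw [sub_ne_zero]
        intro hc
        exact hmn (Fin.val_injective (by exact_mod_cast hc))
      exact_mod_cast Int.one_le_abs hne
    have h2 : |s * (e m - e n)| < 1 := by
      have hem : e m = 0 ∨ e m = 1 := by
        by_cases hmj : m = j <;> simp [he, Pi.single_apply, hmj]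
      have hen : e n = 0 ∨ e n = 1 := by
        by_cases hnj : n = j <;> simp [he, Pi.single_apply, hnj]
      have : |e m - e n| ≤ 1 := by
        rcases hem with h' | h' <;> rcases hen with h'' | h'' <;>
          rw [h', h''] <;> norm_num
      calc |s * (e m - e n)| = |s| * |e m - e n| := abs_mul _ _
        _ ≤ |s| * 1 := by
            exact mul_le_mul_of_nonneg_left this (abs_nonneg s)
        _ < 1 := by rw [mul_one]; exact hs
    have heq' : v0 m - v0 n = -(s * (e m - e n)) := by
      have := h
      simp only [Pi.add_apply, Pi.smul_apply, smul_eq_mul] at this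
      linarith
    rw [heq', abs_neg] at h1
    linarith
  have e0 : D (v0 ∘ ⇑σ.symm) (σ i) = D v0 i := by
    have := hzero v0 hv0
    exact this
  have e1 : D ((v0 + (1 / 2 : ℝ) • e) ∘ ⇑σ.symm) (σ i) = D (v0 + (1 / 2 : ℝ) • e) i := by
    apply hzero
    apply hgen
    rw [abs_of_pos] <;> norm_num
  have hcompadd : (v0 + (1 / 2 : ℝ) • e) ∘ ⇑σ.symm
      = v0 ∘ ⇑σ.symm + (1 / 2 : ℝ) • (e ∘ ⇑σ.symm) := by
    funext k; simp
  rw [hcompadd] at e1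
  have expand : ∀ (a b : Fin d → ℝ) (k : Fin d),
      D (a + (1 / 2 : ℝ) • b) k = D a k + (1 / 2) * D b k := by
    intro a b k
    rw [map_add, _root_.map_smul]
    simp
  rw [expand, expand] at e1
  have key : D (e ∘ ⇑σ.symm) (σ i) = D e i := by linarith
  have hsingle : e ∘ ⇑σ.symm = Pi.single (σ j) 1 := by
    funext k
    simp only [he, Function.comp_apply, Pi.single_apply]
    by_cases hk : k = σ j
    · simp [hk]
    · have : σ.symm k ≠ j := fun hc => hk (by rw [← hc]; simp)
      simp [hk, this]
  rw [← hsingle]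
  exact key
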